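/- Under the hypotheses of the approximation lemma (‖Lψ‖ ≤ C‖ψ‖_1 and ‖e^{iLt}ψ‖_1 ≤ B(t)‖ψ‖_1 for all ψ ∈ H^1(Γ), B ∈ L²_loc), let φ^0 and φ^ε solve (φ^0)' = iLφ^0 and (φ^ε)' = (iL − εΓ)φ^ε with common initial datum φ_0 ∈ H^1(Γ). Then for any time t ≤ τ, ‖φ^ε(t) − φ^0(t)‖² ≤ (ε/2) ‖φ_0‖_1² ∫_0^τ B(s)² ds. -/

import Mathlib

open MeasureTheory Filter Set
open scoped InnerProductSpace ENNReal

noncomputable section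

variable {H : Type*} [NormedAddCommGroup H] [InnerProductSpace ℂ H] [CompleteSpace H]

/-- The spectral data of a self-adjoint, positive, unbounded operator `Γ` with discrete
spectrum on a separable Hilbert space `H`: the eigenvalues `0 < λ 0 ≤ λ 1 ≤ ⋯ → ∞`
together with an orthonormal (Hilbert) basis of corresponding eigenvectors. -/
structure DiscreteSpectralOp (H : Type*) [NormedAddCommGroup H]
    [InnerProductSpace ℂ H] [CompleteSpace H] where
  /-- the orthonormal eigenbasis of `Γ` -/
  e : HilbertBasis ℕ ℂ H
  /-- the eigenvalues of `Γ` -/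
  lam : ℕ → ℝ
  lam_pos : ∀ n, 0 < lam n
  lam_mono : Monotone lam
  lam_top : Tendsto lam atTop atTop

namespace DiscreteSpectralOp

variable (Γ : DiscreteSpectralOp H)

/-- the coefficients of `ψ` in the eigenbasis of `Γ` -/
def coeff (ψ : H) (n : ℕ) : ℂ := Γ.e.repr ψ n

/-- membership in the (homogeneous) Sobolev space `H^m(Γ)`:
`∑ λ_n^m |c_n|² < ∞` -/
def MemHs (m : ℝ) (ψ : H) : Prop :=
  Summable fun n => Γ.lam n ^ m * ‖Γ.coeff ψ n‖ ^ 2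

/-- the Sobolev norm `‖ψ‖_{H^m(Γ)} = (∑ λ_n^m |c_n|²)^{1/2}` -/
def snorm (m : ℝ) (ψ : H) : ℝ :=
  Real.sqrt (∑' n, Γ.lam n ^ m * ‖Γ.coeff ψ n‖ ^ 2)

/-- the operator `Γ` itself, `Γψ = ∑ λ_n c_n e_n` (junk value off its domain `H²(Γ)`) -/
def apply (ψ : H) : H := ∑' n, ((Γ.lam n : ℂ) * Γ.coeff ψ n) • (Γ.e n : H)

/-- the orthogonal projection `P_N` onto the span of the first `N` eigenvectors of `Γ` -/
def projN (N : ℕ) (ψ : H) : H := ∑ n ∈ Finset.range N, Γ.coeff ψ n • (Γ.e n : H)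

end DiscreteSpectralOp

namespace DiscreteSpectralOp
variable (Γ : DiscreteSpectralOp H)

lemma coeff_sub (ψ χ : H) (n : ℕ) : Γ.coeff (ψ - χ) n = Γ.coeff ψ n - Γ.coeff χ n := by
  simp [coeff, map_sub]

lemma memHs_sub {m : ℝ} {ψ χ : H} (hψ : Γ.MemHs m ψ) (hχ : Γ.MemHs m χ) :
    Γ.MemHs m (ψ - χ) := by
  refine Summable.of_nonneg_of_le (fun n => ?_) (fun n => ?_)
    (((hψ.mul_left 2).add (hχ.mul_left 2)))
  · exact mul_nonneg (Real.rpow_nonneg (Γ.lam_pos n).le m) (sq_nonneg _)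
  · have hb : ‖Γ.coeff (ψ - χ) n‖ ^ 2 ≤ 2 * ‖Γ.coeff ψ n‖ ^ 2 + 2 * ‖Γ.coeff χ n‖ ^ 2 := by
      rw [coeff_sub]
      nlinarith [norm_sub_le (Γ.coeff ψ n) (Γ.coeff χ n), norm_nonneg (Γ.coeff ψ n),
        norm_nonneg (Γ.coeff χ n), sq_nonneg (‖Γ.coeff ψ n‖ - ‖Γ.coeff χ n‖),
        norm_nonneg (Γ.coeff ψ n - Γ.coeff χ n)]
    have hl : (0:ℝ) ≤ Γ.lam n ^ m := Real.rpow_nonneg (Γ.lam_pos n).le m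
    nlinarith [mul_le_mul_of_nonneg_left hb hl]

lemma memHs_one_of_two {χ : H} (hχ : Γ.MemHs 2 χ) : Γ.MemHs 1 χ := by
  refine Summable.of_nonneg_of_le (fun n => ?_) (fun n => ?_) (hχ.mul_left (Γ.lam 0)⁻¹)
  · exact mul_nonneg (Real.rpow_nonneg (Γ.lam_pos n).le 1) (sq_nonneg _)
  · have h0 : 0 < Γ.lam 0 := Γ.lam_pos 0
    have hn : Γ.lam 0 ≤ Γ.lam n := Γ.lam_mono (Nat.zero_le n)
    rw [Real.rpow_one, show (2:ℝ) = ((2:ℕ):ℝ) by norm_num, Real.rpow_natCast]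
    have hsq : 0 ≤ ‖Γ.coeff χ n‖ ^ 2 := sq_nonneg _
    have key : Γ.lam n * Γ.lam 0 ≤ Γ.lam n ^ 2 := by nlinarith [Γ.lam_pos n]
    have hc := mul_le_mul_of_nonneg_right key hsq
    have h0' : (0:ℝ) ≤ (Γ.lam 0)⁻¹ := inv_nonneg.mpr h0.le
    have hm := mul_le_mul_of_nonneg_left hc h0'
    have hEq : (Γ.lam 0)⁻¹ * (Γ.lam n * Γ.lam 0 * ‖Γ.coeff χ n‖ ^ 2)
        = Γ.lam n * ‖Γ.coeff χ n‖ ^ 2 := by field_simp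
    rw [hEq] at hm
    linarith [hm]

lemma snorm_sq {m : ℝ} (ψ : H) :
    Γ.snorm m ψ ^ 2 = ∑' n, Γ.lam n ^ m * ‖Γ.coeff ψ n‖ ^ 2 :=
  Real.sq_sqrt (tsum_nonneg fun n =>
    mul_nonneg (Real.rpow_nonneg (Γ.lam_pos n).le m) (sq_nonneg _))

lemma snorm_nonneg {m : ℝ} (ψ : H) : 0 ≤ Γ.snorm m ψ := Real.sqrt_nonneg _

lemma hasSum_inner_apply (ψ χ : H) (hχ : Γ.MemHs 2 χ) :
    HasSum (fun n => (starRingEnd ℂ) (Γ.coeff ψ n) * ((Γ.lam n : ℂ) * Γ.coeff χ n))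
      ⟪ψ, Γ.apply χ⟫_ℂ := by
  set d : ∀ _ : ℕ, ℂ := fun n => (Γ.lam n : ℂ) * Γ.coeff χ n with hd_def
  have hnorm : ∀ n, ‖d n‖ ^ (2:ℝ) = Γ.lam n ^ (2:ℝ) * ‖Γ.coeff χ n‖ ^ 2 := by
    intro n
    have hpos := (Γ.lam_pos n).le
    rw [show ((2:ℝ)) = ((2:ℕ):ℝ) by norm_num, Real.rpow_natCast, Real.rpow_natCast]
    rw [hd_def]
    simp only [norm_mul, Complex.norm_real, Real.norm_eq_abs, abs_of_nonneg hpos]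
    ring
  have hd : Memℓp d 2 := by
    apply memℓp_gen
    have h2 : (2:ℝ≥0∞).toReal = (2:ℝ) := by norm_num
    rw [h2]
    exact (Summable.congr hχ (fun n => (hnorm n).symm))
  set D : lp (fun _ : ℕ => ℂ) 2 := ⟨d, hd⟩ with hD_def
  have hApply : Γ.apply χ = Γ.e.repr.symm D := by
    have := Γ.e.hasSum_repr_symm D
    exact this.tsum_eq
  have hinner : ⟪ψ, Γ.apply χ⟫_ℂ = ⟪Γ.e.repr ψ, D⟫_ℂ := by
    rw [hApply, ← LinearIsometryEquiv.inner_map_map Γ.e.repr,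
      LinearIsometryEquiv.apply_symm_apply]
  rw [hinner]
  have := lp.hasSum_inner (𝕜 := ℂ) (Γ.e.repr ψ) D
  have heq : (fun n => (starRingEnd ℂ) (Γ.coeff ψ n) * ((Γ.lam n : ℂ) * Γ.coeff χ n))
      = fun n => ⟪(Γ.e.repr ψ) n, D n⟫_ℂ := by
    funext n
    rw [RCLike.inner_apply]
    exact mul_comm _ _
  rw [heq]
  exact this


lemma hasSum_re_inner_apply (ψ χ : H) (hχ : Γ.MemHs 2 χ) :
    HasSum (fun n => Γ.lam n * ((starRingEnd ℂ) (Γ.coeff ψ n) * Γ.coeff χ n).re)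
      (⟪ψ, Γ.apply χ⟫_ℂ).re := by
  have h := (Γ.hasSum_inner_apply ψ χ hχ).mapL Complex.reCLM
  have heq : (fun n => Complex.reCLM ((starRingEnd ℂ) (Γ.coeff ψ n) * ((Γ.lam n : ℂ) * Γ.coeff χ n)))
      = fun n => Γ.lam n * ((starRingEnd ℂ) (Γ.coeff ψ n) * Γ.coeff χ n).re := by
    funext n
    have h2 : (starRingEnd ℂ) (Γ.coeff ψ n) * ((Γ.lam n : ℂ) * Γ.coeff χ n)
        = (Γ.lam n : ℂ) * ((starRingEnd ℂ) (Γ.coeff ψ n) * Γ.coeff χ n) := by ring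
    simp only [Complex.reCLM_apply, h2]
    simp [Complex.mul_re]
  rwa [heq] at h

lemma re_conj_mul_self (b : ℂ) : ((starRingEnd ℂ) b * b).re = ‖b‖ ^ 2 := by
  simp [Complex.mul_re, Complex.conj_re, Complex.conj_im, Complex.sq_norm,
    Complex.normSq_apply]
  try ring

lemma re_inner_apply_self (χ : H) (hχ : Γ.MemHs 2 χ) :
    (⟪χ, Γ.apply χ⟫_ℂ).re = Γ.snorm 1 χ ^ 2 := by
  have h := (Γ.hasSum_re_inner_apply χ χ hχ).tsum_eq
  rw [Γ.snorm_sq, ← h]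
  congr 1
  funext n
  rw [re_conj_mul_self, Real.rpow_one]

lemma re_inner_apply_le (ψ χ : H) (hψ : Γ.MemHs 1 ψ) (hχ : Γ.MemHs 2 χ) :
    (⟪ψ, Γ.apply χ⟫_ℂ).re ≤ 1/4 * Γ.snorm 1 ψ ^ 2 + (⟪χ, Γ.apply χ⟫_ℂ).re := by
  have hL := Γ.hasSum_re_inner_apply ψ χ hχ
  have hR := Γ.hasSum_re_inner_apply χ χ hχ
  have hS : HasSum (fun n => 1/4 * (Γ.lam n ^ (1:ℝ) * ‖Γ.coeff ψ n‖ ^ 2)) (1/4 * Γ.snorm 1 ψ ^ 2) := by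
    rw [Γ.snorm_sq]
    exact hψ.hasSum.mul_left _
  have hSum := hS.add hR
  refine hasSum_le (fun n => ?_) hL hSum
  have hlam := (Γ.lam_pos n).le
  have h1 : ((starRingEnd ℂ) (Γ.coeff ψ n) * Γ.coeff χ n).re
      ≤ 1/4 * ‖Γ.coeff ψ n‖ ^ 2 + ((starRingEnd ℂ) (Γ.coeff χ n) * Γ.coeff χ n).re := by
    rw [re_conj_mul_self]
    have h2 : ((starRingEnd ℂ) (Γ.coeff ψ n) * Γ.coeff χ n).re
        ≤ ‖Γ.coeff ψ n‖ * ‖Γ.coeff χ n‖ := by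
      calc ((starRingEnd ℂ) (Γ.coeff ψ n) * Γ.coeff χ n).re
          ≤ ‖(starRingEnd ℂ) (Γ.coeff ψ n) * Γ.coeff χ n‖ := Complex.re_le_norm _
        _ = ‖Γ.coeff ψ n‖ * ‖Γ.coeff χ n‖ := by
            simp
    nlinarith [sq_nonneg (‖Γ.coeff ψ n‖ / 2 - ‖Γ.coeff χ n‖), norm_nonneg (Γ.coeff ψ n),
      norm_nonneg (Γ.coeff χ n)]
  rw [Real.rpow_one]
  nlinarith [mul_le_mul_of_nonneg_left h1 hlam]


end DiscreteSpectralOp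

set_option linter.unusedSectionVars false

theorem hasDerivAt_norm_sq (w : ℝ → H) (w' : H) (s : ℝ) (hw : HasDerivAt w w' s) :
    HasDerivAt (fun u => ‖w u‖ ^ 2) (2 * (⟪w s, w'⟫_ℂ).re) s := by
  have h1 : HasDerivAt (fun u => ⟪w u, w u⟫_ℂ) (⟪w s, w'⟫_ℂ + ⟪w', w s⟫_ℂ) s := hw.inner ℂ hw
  have h2 := Complex.reCLM.hasFDerivAt.comp_hasDerivAt s h1
  have e1 : (⇑Complex.reCLM ∘ fun u => ⟪w u, w u⟫_ℂ) = fun u => ‖w u‖ ^ 2 := by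
    funext u
    simpa using inner_self_eq_norm_sq (𝕜 := ℂ) (w u)
  have e2 : Complex.reCLM (⟪w s, w'⟫_ℂ + ⟪w', w s⟫_ℂ) = 2 * (⟪w s, w'⟫_ℂ).re := by
    have h : ⟪w', w s⟫_ℂ = starRingEnd ℂ ⟪w s, w'⟫_ℂ := (inner_conj_symm _ _).symm
    simp only [Complex.reCLM_apply, Complex.add_re, h, Complex.conj_re]
    ring
  rw [e1, e2] at h2
  exact h2

theorem re_inner_I_smul (L : H →ₗ[ℂ] H) (w : H) (h : ⟪L w, w⟫_ℂ = ⟪w, L w⟫_ℂ) :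
    (⟪w, Complex.I • L w⟫_ℂ).re = 0 := by
  have hz : ⟪w, L w⟫_ℂ = starRingEnd ℂ ⟪w, L w⟫_ℂ := by
    rw [inner_conj_symm (L w) w, h]
  have him : (⟪w, L w⟫_ℂ).im = 0 := by
    have := congrArg Complex.im hz
    rw [Complex.conj_im] at this
    linarith
  rw [inner_smul_right]
  simp [Complex.mul_re, him]


/-- A strongly continuous one-parameter unitary group `t ↦ U t = e^{iLt}` on `H`
(by Stone's theorem such groups correspond exactly to self-adjoint generators `L`). -/
structure UnitaryGroup (H : Type*) [NormedAddCommGroup H] [InnerProductSpace ℂ H]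
    [CompleteSpace H] where
  /-- the unitary operator `e^{iLt}` -/
  U : ℝ → (H ≃ₗᵢ[ℂ] H)
  map_zero : ∀ ψ, U 0 ψ = ψ
  map_add : ∀ s t ψ, U (s + t) ψ = U s (U t ψ)
  strong_cont : ∀ ψ, Continuous fun t => U t ψ

namespace UnitaryGroup

variable (G : UnitaryGroup H)

/-- `ψ` is an eigenvector of the self-adjoint generator `L` of the group `U t = e^{iLt}`,
i.e. `ψ ≠ 0` and `e^{iLt} ψ = e^{iEt} ψ` for some real eigenvalue `E`. -/
def IsEigenvector (ψ : H) : Prop :=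
  ψ ≠ 0 ∧ ∃ E : ℝ, ∀ t : ℝ, G.U t ψ = Complex.exp (Complex.I * E * t) • ψ

/-- the pure point spectral subspace of the generator of the group -/
def ppSpace : Submodule ℂ H :=
  (Submodule.span ℂ {ψ : H | G.IsEigenvector ψ}).topologicalClosure

/-- the spectral projection `P_p` onto the pure point spectral subspace -/
def Pp (ψ : H) : H :=
  haveI : CompleteSpace (G.ppSpace : Submodule ℂ H) :=
    (Submodule.isClosed_topologicalClosure _).completeSpace_coe
  (Submodule.orthogonalProjectionOnto G.ppSpace ψ : H)

/-- the spectral projection `P_c` onto the continuous spectral subspace -/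
def Pc (ψ : H) : H := ψ - G.Pp ψ

end UnitaryGroup

/-- `φ` solves the damped equation `(φ^ε)'(t) = (iL − εΓ)φ^ε(t)`, `φ^ε(0) = φ₀`. -/
def IsDampedSolution (Γ : DiscreteSpectralOp H) (L : H →ₗ[ℂ] H) (ε : ℝ) (φ₀ : H)
    (φ : ℝ → H) : Prop :=
  φ 0 = φ₀ ∧ ContinuousOn φ (Ici 0) ∧
    ∀ t : ℝ, 0 < t → Γ.MemHs 2 (φ t) ∧
      HasDerivAt φ (Complex.I • L (φ t) - (ε : ℂ) • Γ.apply (φ t)) t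

/-- `φ` solves the free equation `(φ⁰)'(t) = iLφ⁰(t)`, `φ⁰(0) = φ₀`. -/
def IsFreeSolution (Γ : DiscreteSpectralOp H) (L : H →ₗ[ℂ] H) (φ₀ : H)
    (φ : ℝ → H) : Prop :=
  φ 0 = φ₀ ∧ ∀ t : ℝ, Γ.MemHs 1 (φ t) ∧ HasDerivAt φ (Complex.I • L (φ t)) t

/-- **Corollary 2.6.**  Under conditions (2.1) and (2.2), if `φ⁰` and `φ^ε` solve
`(φ⁰)' = iLφ⁰` and `(φ^ε)' = (iL − εΓ)φ^ε` with the same initial datum `φ₀ ∈ H¹(Γ)`,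
then `‖φ^ε(t) − φ⁰(t)‖² ≤ (ε/2)‖φ₀‖₁² ∫₀^τ B(s)² ds` for every `0 ≤ t ≤ τ`. -/
theorem approximation_corollary
    (Γ : DiscreteSpectralOp H) (L : H →ₗ[ℂ] H) (G : UnitaryGroup H)
    (hsym : ∀ ψ χ : H, Γ.MemHs 1 ψ → Γ.MemHs 1 χ → ⟪L ψ, χ⟫_ℂ = ⟪ψ, L χ⟫_ℂ)
    (hgen : ∀ ψ : H, Γ.MemHs 1 ψ →
      HasDerivAt (fun t => G.U t ψ) (Complex.I • L ψ) 0)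
    (C : ℝ) (hL : ∀ ψ : H, Γ.MemHs 1 ψ → ‖L ψ‖ ≤ C * Γ.snorm 1 ψ)
    (B : ℝ → ℝ) (hBloc : ∀ T : ℝ, 0 < T → IntegrableOn (fun t => (B t) ^ 2) (Ioc 0 T))
    (hB : ∀ ψ : H, Γ.MemHs 1 ψ → ∀ t : ℝ, 0 < t →
      Γ.MemHs 1 (G.U t ψ) ∧ Γ.snorm 1 (G.U t ψ) ≤ B t * Γ.snorm 1 ψ)
    (ε : ℝ) (hε : 0 < ε) (φ₀ : H) (hφ₀ : Γ.MemHs 1 φ₀)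
    (φe : ℝ → H) (hφe : IsDampedSolution Γ L ε φ₀ φe)
    (φ0 : ℝ → H) (hφ0 : IsFreeSolution Γ L φ₀ φ0)
    (τ : ℝ) (hτ : 0 < τ) :
    ∀ t ∈ Icc (0 : ℝ) τ,
      ‖φe t - φ0 t‖ ^ 2 ≤
        ε / 2 * Γ.snorm 1 φ₀ ^ 2 * ∫ s in Ioc (0 : ℝ) τ, (B s) ^ 2 := by
  intro t ht
  have cφ0 : Continuous φ0 := continuous_iff_continuousAt.mpr fun s => ((hφ0.2 s).2).continuousAt
  -- Step 1: the free solution is given by the unitary group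
  have hfree : ∀ s : ℝ, 0 ≤ s → φ0 s = G.U s φ₀ := by
    intro s hs
    set w : ℝ → H := fun u => φ0 u - G.U u φ₀ with hw_def
    have hcont : ContinuousOn (fun u => ‖w u‖ ^ 2) (Icc 0 s) :=
      ((cφ0.sub (G.strong_cont φ₀)).norm.pow 2).continuousOn
    have hderiv : ∀ x ∈ Ioo 0 s,
        HasDerivWithinAt (fun u => ‖w u‖ ^ 2) ((fun _ : ℝ => (0:ℝ)) x) (Ioi x) x := by
      intro x hx
      have hmem : Γ.MemHs 1 (G.U x φ₀) := (hB φ₀ hφ₀ x hx.1).1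
      have h0 : HasDerivAt (fun u => G.U u (G.U x φ₀)) (Complex.I • L (G.U x φ₀)) 0 :=
        hgen _ hmem
      have hι : HasDerivAt (fun u : ℝ => u - x) 1 x := (hasDerivAt_id x).sub_const x
      have hshift : HasDerivAt ((fun u => G.U u (G.U x φ₀)) ∘ (fun u : ℝ => u - x))
          ((1:ℝ) • (Complex.I • L (G.U x φ₀))) x := by
        refine HasDerivAt.scomp x ?_ hι
        simpa using h0
      have hUeq : ((fun u => G.U u (G.U x φ₀)) ∘ (fun u : ℝ => u - x)) = fun u => G.U u φ₀ := by
        funext u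
        have h := G.map_add (u - x) x φ₀
        rw [sub_add_cancel] at h
        exact h.symm
      rw [hUeq, one_smul] at hshift
      have hw' : HasDerivAt w (Complex.I • L (w x)) x := by
        have h := ((hφ0.2 x).2).sub hshift
        have heq : Complex.I • L (φ0 x) - Complex.I • L (G.U x φ₀) = Complex.I • L (w x) := by
          rw [hw_def]
          simp only [map_sub, smul_sub]
        rwa [heq] at h
      have hD := hasDerivAt_norm_sq w _ x hw'
      have hmem1 : Γ.MemHs 1 (w x) := Γ.memHs_sub (hφ0.2 x).1 hmem
      have hzero : (⟪w x, Complex.I • L (w x)⟫_ℂ).re = 0 :=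
        re_inner_I_smul L (w x) (hsym _ _ hmem1 hmem1)
      rw [hzero, mul_zero] at hD
      exact hD.hasDerivWithinAt
    have hint : IntegrableOn (fun _ : ℝ => (0:ℝ)) (Icc 0 s) := integrableOn_zero
    have hkey := intervalIntegral.sub_le_integral_of_hasDeriv_right_of_le hs hcont hderiv hint
      (fun x _ => le_refl (0:ℝ))
    rw [intervalIntegral.integral_zero] at hkey
    have h00 : w 0 = 0 := by
      rw [hw_def]
      simp [hφ0.1, G.map_zero]
    have hle : ‖w s‖ ^ 2 ≤ 0 := by simpa [h00] using hkey
    have hnorm : ‖w s‖ = 0 := by nlinarith [sq_nonneg ‖w s‖, norm_nonneg (w s)]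
    rw [norm_eq_zero, hw_def, sub_eq_zero] at hnorm
    exact hnorm
  -- Step 2: energy estimate for the difference
  set S : ℝ := Γ.snorm 1 φ₀ with hS_def
  have hS0 : 0 ≤ S := Γ.snorm_nonneg φ₀
  set δ : ℝ → H := fun s => φe s - φ0 s with hδ_def
  set g' : ℝ → ℝ := fun s => 2 * (⟪δ s,
    (Complex.I • L (φe s) - (ε:ℂ) • Γ.apply (φe s)) - Complex.I • L (φ0 s)⟫_ℂ).re with hg'_def
  set φB : ℝ → ℝ := fun s => ε / 2 * S ^ 2 * B s ^ 2 with hφB_def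
  have hcont : ContinuousOn (fun u => ‖δ u‖ ^ 2) (Icc 0 t) := by
    have h1 : ContinuousOn φe (Icc 0 t) := hφe.2.1.mono (Icc_subset_Ici_self)
    exact (h1.sub cφ0.continuousOn).norm.pow 2
  have hderiv : ∀ x ∈ Ioo 0 t, HasDerivWithinAt (fun u => ‖δ u‖ ^ 2) (g' x) (Ioi x) x := by
    intro x hx
    have hδ' : HasDerivAt δ ((Complex.I • L (φe x) - (ε:ℂ) • Γ.apply (φe x))
        - Complex.I • L (φ0 x)) x := ((hφe.2.2 x hx.1).2).sub (hφ0.2 x).2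
    exact (hasDerivAt_norm_sq δ _ x hδ').hasDerivWithinAt
  have hbound : ∀ x ∈ Ioo 0 t, g' x ≤ φB x := by
    intro x hx
    have h2 : Γ.MemHs 2 (φe x) := (hφe.2.2 x hx.1).1
    have h1e : Γ.MemHs 1 (φe x) := Γ.memHs_one_of_two h2
    have h10 : Γ.MemHs 1 (φ0 x) := (hφ0.2 x).1
    have h1δ : Γ.MemHs 1 (δ x) := Γ.memHs_sub h1e h10
    have heq : (Complex.I • L (φe x) - (ε:ℂ) • Γ.apply (φe x)) - Complex.I • L (φ0 x)
        = Complex.I • L (δ x) - (ε:ℂ) • Γ.apply (φe x) := by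
      rw [hδ_def]
      simp only [map_sub, smul_sub]
      abel
    have hsplit : (⟪δ x, (Complex.I • L (φe x) - (ε:ℂ) • Γ.apply (φe x))
        - Complex.I • L (φ0 x)⟫_ℂ).re
        = (⟪δ x, Complex.I • L (δ x)⟫_ℂ).re - (⟪δ x, (ε:ℂ) • Γ.apply (φe x)⟫_ℂ).re := by
      rw [heq, inner_sub_right, Complex.sub_re]
    have hzero : (⟪δ x, Complex.I • L (δ x)⟫_ℂ).re = 0 :=
      re_inner_I_smul L (δ x) (hsym _ _ h1δ h1δ)
    have hsm : (⟪δ x, (ε:ℂ) • Γ.apply (φe x)⟫_ℂ).re = ε * (⟪δ x, Γ.apply (φe x)⟫_ℂ).re := by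
      rw [inner_smul_right]
      simp [Complex.mul_re]
    have hδsplit : (⟪δ x, Γ.apply (φe x)⟫_ℂ).re
        = (⟪φe x, Γ.apply (φe x)⟫_ℂ).re - (⟪φ0 x, Γ.apply (φe x)⟫_ℂ).re := by
      rw [hδ_def]
      simp only [inner_sub_left, Complex.sub_re]
    have hkey : (⟪φ0 x, Γ.apply (φe x)⟫_ℂ).re
        ≤ 1/4 * Γ.snorm 1 (φ0 x) ^ 2 + (⟪φe x, Γ.apply (φe x)⟫_ℂ).re :=
      Γ.re_inner_apply_le (φ0 x) (φe x) h10 h2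
    have hUsn : Γ.snorm 1 (φ0 x) ^ 2 ≤ B x ^ 2 * S ^ 2 := by
      have hb := (hB φ₀ hφ₀ x hx.1).2
      rw [hfree x hx.1.le]
      calc Γ.snorm 1 (G.U x φ₀) ^ 2 ≤ (B x * S) ^ 2 := by
            have hnn : (0:ℝ) ≤ Γ.snorm 1 (G.U x φ₀) := Γ.snorm_nonneg _
            nlinarith [hnn, hb, hS0]
        _ = B x ^ 2 * S ^ 2 := by ring
    have hφBx : φB x = ε / 2 * S ^ 2 * B x ^ 2 := rfl
    have hg'x : g' x = 2 * ((⟪δ x, Complex.I • L (δ x)⟫_ℂ).re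
        - ε * (⟪δ x, Γ.apply (φe x)⟫_ℂ).re) := by
      rw [hg'_def]
      simp only [hsplit, hsm]
    rw [hg'x, hzero, hδsplit, hφBx]
    nlinarith [hkey, hUsn, hε.le]
  have hB2 : IntegrableOn (fun s => B s ^ 2) (Ioc 0 τ) := hBloc τ hτ
  have hB2t : IntegrableOn (fun s => B s ^ 2) (Ioc 0 t) :=
    hB2.mono_set (Ioc_subset_Ioc_right ht.2)
  have hint : IntegrableOn φB (Icc 0 t) := by
    rw [integrableOn_Icc_iff_integrableOn_Ioc]
    exact hB2t.const_mul _
  have hkey := intervalIntegral.sub_le_integral_of_hasDeriv_right_of_le ht.1 hcont hderiv hint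
    hbound
  have hδ0 : δ 0 = 0 := by
    rw [hδ_def]
    simp [hφe.1, hφ0.1]
  have hI1 : ∫ y in (0:ℝ)..t, φB y = ∫ y in Ioc (0:ℝ) t, φB y :=
    intervalIntegral.integral_of_le ht.1
  have hI2 : ∫ y in Ioc (0:ℝ) t, φB y = ε / 2 * S ^ 2 * ∫ y in Ioc (0:ℝ) t, B y ^ 2 := by
    rw [hφB_def]
    exact MeasureTheory.integral_const_mul _ _
  have hI3 : ∫ y in Ioc (0:ℝ) t, B y ^ 2 ≤ ∫ y in Ioc (0:ℝ) τ, B y ^ 2 :=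
    setIntegral_mono_set hB2 (Filter.Eventually.of_forall fun y => sq_nonneg (B y))
      (HasSubset.Subset.eventuallyLE (Ioc_subset_Ioc_right ht.2))
  have hεS : 0 ≤ ε / 2 * S ^ 2 := by positivity
  have hfinal : ‖δ t‖ ^ 2 ≤ ε / 2 * S ^ 2 * ∫ y in Ioc (0:ℝ) τ, B y ^ 2 := by
    calc ‖δ t‖ ^ 2 = ‖δ t‖ ^ 2 - ‖δ 0‖ ^ 2 := by rw [hδ0]; simp
      _ ≤ ∫ y in (0:ℝ)..t, φB y := hkey
      _ = ε / 2 * S ^ 2 * ∫ y in Ioc (0:ℝ) t, B y ^ 2 := by rw [hI1, hI2]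
      _ ≤ ε / 2 * S ^ 2 * ∫ y in Ioc (0:ℝ) τ, B y ^ 2 :=
          mul_le_mul_of_nonneg_left hI3 hεS
  exact hfinal
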